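/- arXiv:0810.0041 — 6 statements merged into one kernel-verified Lean document; each statement's English description precedes it below -/
import Mathlib

section
/- Every δ-supplement submodule of a module M is δ-coclosed in M. -/
open Submodule

section Defs

universe u v

variable (R : Type u) [Ring R]

/-- A submodule `L` is essential in `M` if it intersects every nonzero submodule nontrivially. -/
def IsEssentialSub {M : Type v} [AddCommGroup M] [Module R M] (L : Submodule R M) : Prop :=
  ∀ K : Submodule R M, K ≠ ⊥ → L ⊓ K ≠ ⊥

/-- A module is singular if it is isomorphic to `N ⧸ L` for some module `N` and
essential submodule `L ≤ N`. -/
def IsSingular (M : Type v) [AddCommGroup M] [Module R M] : Prop :=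
  ∃ (N : Type v) (_ : AddCommGroup N) (_ : Module R N) (L : Submodule R N),
    IsEssentialSub R L ∧ Nonempty ((N ⧸ L) ≃ₗ[R] M)

variable {M : Type v} [AddCommGroup M] [Module R M]

/-- `N` is small in `M`: `N + Z ≠ M` for every proper submodule `Z`. -/
def SmallSub (N : Submodule R M) : Prop :=
  ∀ Z : Submodule R M, Z ≠ ⊤ → N ⊔ Z ≠ ⊤

/-- `N` is δ-small in `M`: `N + Z ≠ M` for every proper submodule `Z` with `M ⧸ Z` singular. -/
def DeltaSmall (N : Submodule R M) : Prop :=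
  ∀ Z : Submodule R M, Z ≠ ⊤ → IsSingular R (M ⧸ Z) → N ⊔ Z ≠ ⊤

/-- `δ(M)`: the sum of all δ-small submodules of `M`. -/
def deltaRad : Submodule R M := sSup {N : Submodule R M | DeltaSmall R N}

/-- The radical: intersection of all maximal submodules. -/
def radM : Submodule R M := sInf {K : Submodule R M | IsCoatom K}

/-- The socle: sum of all simple submodules. -/
def socM : Submodule R M := sSup {S : Submodule R M | IsAtom S}

/-- `N` is a δ-supplement of `K` in `M`: `N + K = M` and `N ∩ K` is δ-small in `N`. -/
def IsDeltaSupplement (N K : Submodule R M) : Prop :=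
  N ⊔ K = ⊤ ∧ DeltaSmall R ((N ⊓ K).comap N.subtype)

/-- `N` is a δ-supplement submodule of `M`. -/
def IsDeltaSupplementSub (N : Submodule R M) : Prop :=
  ∃ K : Submodule R M, IsDeltaSupplement R N K

/-- `N` is a supplement of `K` in `M`: `N + K = M` and `N ∩ K` is small in `N`. -/
def IsSupplement (N K : Submodule R M) : Prop :=
  N ⊔ K = ⊤ ∧ SmallSub R ((N ⊓ K).comap N.subtype)

/-- `M` is δ-supplemented: every submodule has a δ-supplement. -/
def DeltaSupplemented (M : Type v) [AddCommGroup M] [Module R M] : Prop :=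
  ∀ L : Submodule R M, ∃ N : Submodule R M, IsDeltaSupplement R N L

/-- `M` is supplemented: every submodule has a supplement. -/
def Supplemented (M : Type v) [AddCommGroup M] [Module R M] : Prop :=
  ∀ L : Submodule R M, ∃ N : Submodule R M, IsSupplement R N L

/-- `N` is δ-coclosed in `M`: if `X ≤ N`, `N/X` is singular and `N/X ≪_δ M/X`, then `X = N`. -/
def DeltaCoclosed (N : Submodule R M) : Prop :=
  ∀ X : Submodule R M, X ≤ N →
    IsSingular R ↥(N.map X.mkQ) → DeltaSmall R (N.map X.mkQ) → X = N

/-- `N` is coclosed in `M`: if `X ≤ N` and `N/X ≪ M/X`, then `X = N`. -/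
def Coclosed (N : Submodule R M) : Prop :=
  ∀ X : Submodule R M, X ≤ N → SmallSub R (N.map X.mkQ) → X = N

/-- A module is local if it has a largest proper submodule. -/
def LocalModule (M : Type v) [AddCommGroup M] [Module R M] : Prop :=
  ∃ L : Submodule R M, L ≠ ⊤ ∧ ∀ K : Submodule R M, K ≠ ⊤ → K ≤ L

/-- `M` is δ-local if `δ(M)` is δ-small in `M` and `δ(M)` is a maximal submodule. -/
def DeltaLocal (M : Type v) [AddCommGroup M] [Module R M] : Prop :=
  DeltaSmall R (deltaRad R : Submodule R M) ∧ IsCoatom (deltaRad R : Submodule R M)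

end Defs

section Aux

universe u v

variable {R : Type u} [Ring R]

lemma isSingular_of_surjective {A B : Type v} [AddCommGroup A] [Module R A]
    [AddCommGroup B] [Module R B] (hA : IsSingular R A) (f : A →ₗ[R] B)
    (hf : Function.Surjective f) : IsSingular R B := by
  obtain ⟨P, _, _, L, hL, ⟨e⟩⟩ := hA
  let g : P →ₗ[R] B := f ∘ₗ (e : (P ⧸ L) →ₗ[R] A) ∘ₗ L.mkQ
  have hg : Function.Surjective g :=
    hf.comp (e.surjective.comp L.mkQ_surjective)
  have hLK : L ≤ LinearMap.ker g := by
    intro x hx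
    simp [g, LinearMap.mem_ker, (Submodule.Quotient.mk_eq_zero L).2 hx,
      Submodule.mkQ_apply]
  have hess : IsEssentialSub R (LinearMap.ker g) := fun K hK hbot =>
    hL K hK (le_bot_iff.1 (hbot ▸ inf_le_inf_right K hLK))
  exact ⟨P, inferInstance, inferInstance, LinearMap.ker g, hess, ⟨g.quotKerEquivOfSurjective hg⟩⟩

end Aux
theorem deltaSupplement_is_deltaCoclosed {R : Type*} [Ring R] {M : Type*} [AddCommGroup M]
    [Module R M] (N : Submodule R M) (h : IsDeltaSupplementSub R N) :
    DeltaCoclosed R N := by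
  obtain ⟨K, hNK, hsmall⟩ := h
  intro X hXN hsing hdelta
  -- Step 1: K ⊔ X = ⊤
  have htop : K ⊔ X = ⊤ := by
    by_contra hne
    set Z := (K ⊔ X).map X.mkQ with hZ
    have hZtop : N.map X.mkQ ⊔ Z = ⊤ := by
      rw [hZ, ← Submodule.map_sup]
      have h1 : N ⊔ (K ⊔ X) = ⊤ := by rw [← sup_assoc, hNK]; simp
      rw [h1, Submodule.map_top, Submodule.range_mkQ]
    have hZne : Z ≠ ⊤ := by
      intro hZt
      apply hne
      have := congrArg (Submodule.comap X.mkQ) hZt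
      rw [Submodule.comap_map_mkQ, Submodule.comap_top] at this
      rw [← this, sup_comm X, sup_assoc, sup_idem]
    have hgsurj : Function.Surjective (Z.mkQ ∘ₗ (N.map X.mkQ).subtype) := by
      intro y
      obtain ⟨m, rfl⟩ := Z.mkQ_surjective y
      have hm : m ∈ N.map X.mkQ ⊔ Z := by rw [hZtop]; trivial
      obtain ⟨a, ha, b, hb, rfl⟩ := Submodule.mem_sup.1 hm
      refine ⟨⟨a, ha⟩, ?_⟩
      simp only [LinearMap.comp_apply, Submodule.subtype_apply, Submodule.mkQ_apply]
      rw [Submodule.Quotient.eq]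
      simpa using neg_mem hb
    have hZsing : IsSingular R ((M ⧸ X) ⧸ Z) :=
      isSingular_of_surjective hsing _ hgsurj
    exact hdelta Z hZne hZsing hZtop
  -- Step 2: modular law gives (N ⊓ K) ⊔ X = N
  have hmod : X ⊔ (K ⊓ N) = N := by
    have := sup_inf_assoc_of_le (x := X) (z := N) K hXN
    rw [sup_comm X K, htop, top_inf_eq] at this
    exact this.symm
  -- Step 3: conclude X = N using δ-smallness of N ⊓ K in N
  by_contra hXneqN
  set Z' := X.comap N.subtype with hZ'
  have hZ'ne : Z' ≠ ⊤ := by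
    intro hZt
    exact hXneqN (le_antisymm hXN (by rwa [Submodule.comap_subtype_eq_top] at hZt))
  have hsup : (N ⊓ K).comap N.subtype ⊔ Z' = ⊤ := by
    apply Submodule.map_injective_of_injective N.injective_subtype
    rw [Submodule.map_sup, Submodule.map_comap_subtype, Submodule.map_comap_subtype,
      Submodule.map_top, Submodule.range_subtype]
    rw [inf_of_le_right (inf_le_left : N ⊓ K ≤ N), inf_of_le_right hXN,
      inf_comm N K, sup_comm, hmod]
  have hsingN : IsSingular R (↥N ⧸ Z') := by
    let f : ↥N →ₗ[R] M ⧸ X := X.mkQ.comp N.subtype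
    have hker : LinearMap.ker f = Z' := by
      rw [hZ']; simp [f, LinearMap.ker_comp, Submodule.ker_mkQ]
    have hrange : LinearMap.range f = N.map X.mkQ := by
      rw [LinearMap.range_comp, Submodule.range_subtype]
    let e : (↥N ⧸ Z') ≃ₗ[R] ↥(N.map X.mkQ) :=
      (Submodule.quotEquivOfEq _ _ hker.symm).trans
        (f.quotKerEquivRange.trans (LinearEquiv.ofEq _ _ hrange))
    exact isSingular_of_surjective hsing e.symm.toLinearMap e.symm.surjective
  exact hsmall Z' hZ'ne hsingN hsup
end

section
/- If N is a δ-coclosed submodule of M and K ≤ N is δ-small in M, then K is δ-small in N. -/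
open Submodule

theorem deltaSmall_of_deltaCoclosed {R : Type*} [Ring R] {M : Type*} [AddCommGroup M]
    [Module R M] (N K : Submodule R M) (hN : DeltaCoclosed R N) (hKN : K ≤ N)
    (hK : DeltaSmall R K) : DeltaSmall R (K.comap N.subtype) := by
  intro Z hZ hsing hcontra
  set X : Submodule R M := Z.map N.subtype with hXdef
  have hXN : X ≤ N := by
    rw [hXdef]
    exact (Submodule.map_subtype_le N Z)
  -- K ⊔ X = N
  have hKX : K ⊔ X = N := by
    have h := congrArg (Submodule.map N.subtype) hcontra
    rw [Submodule.map_sup, Submodule.map_comap_eq, Submodule.range_subtype,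
      inf_eq_right.mpr hKN, Submodule.map_top, Submodule.range_subtype] at h
    exact h
  -- N ⧸ Z ≃ N.map X.mkQ
  have hker : LinearMap.ker (X.mkQ ∘ₗ N.subtype) = Z := by
    rw [LinearMap.ker_comp, Submodule.ker_mkQ, hXdef,
      Submodule.comap_map_eq_of_injective N.injective_subtype]
  have hrange : LinearMap.range (X.mkQ ∘ₗ N.subtype) = N.map X.mkQ := by
    rw [LinearMap.range_comp, Submodule.range_subtype]
  let e : (N ⧸ Z) ≃ₗ[R] ↥(N.map X.mkQ) :=
    (Submodule.quotEquivOfEq _ _ hker.symm).trans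
      ((LinearMap.quotKerEquivRange _).trans (LinearEquiv.ofEq _ _ hrange))
  have hsingX : IsSingular R ↥(N.map X.mkQ) := by
    obtain ⟨A, iA, mA, L, hL, ⟨e0⟩⟩ := hsing
    exact ⟨A, iA, mA, L, hL, ⟨e0.trans e⟩⟩
  -- N.map X.mkQ is δ-small in M ⧸ X
  have hds : DeltaSmall R (N.map X.mkQ) := by
    intro T hT hTsing hsup
    set W : Submodule R M := T.comap X.mkQ with hWdef
    have hsurj : Function.Surjective X.mkQ := Submodule.mkQ_surjective X
    have hTW : W.map X.mkQ = T := Submodule.map_comap_eq_of_surjective hsurj T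
    have hWne : W ≠ ⊤ := fun h => hT (by
      rw [← hTW, h, Submodule.map_top, Submodule.range_mkQ])
    have hXW : X ≤ W := by
      intro x hx
      have : X.mkQ x = 0 := (Submodule.Quotient.mk_eq_zero X).mpr hx
      simp [hWdef, Submodule.mem_comap, this]
    have hNW : N ⊔ W = ⊤ := by
      have h1 : (N ⊔ W).map X.mkQ = ⊤ := by
        rw [Submodule.map_sup, hTW, hsup]
      have h2 := congrArg (Submodule.comap X.mkQ) h1
      rw [Submodule.comap_map_eq, Submodule.ker_mkQ, Submodule.comap_top,
        sup_eq_left.mpr (hXW.trans le_sup_right)] at h2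
      exact h2
    have hKW : K ⊔ W = ⊤ := by
      rw [← hNW, ← hKX, sup_assoc, sup_eq_right.mpr hXW]
    have hWsing : IsSingular R (M ⧸ W) := by
      obtain ⟨A, iA, mA, L, hL, ⟨e0⟩⟩ := hTsing
      exact ⟨A, iA, mA, L, hL,
        ⟨e0.trans ((Submodule.quotEquivOfEq T (W.map X.mkQ) hTW.symm).trans
          (Submodule.quotientQuotientEquivQuotient X W hXW))⟩⟩
    exact hK W hWne hWsing hKW
  have hXeq : X = N := hN X hXN hsingX hds
  apply hZ
  have h := congrArg (Submodule.comap N.subtype) hXeq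
  rw [hXdef, Submodule.comap_map_eq_of_injective N.injective_subtype,
    Submodule.comap_subtype_self] at h
  exact h
end

section
/- If N is a δ-coclosed submodule of M and X is a proper submodule of N such that N/X is δ-small in M/X, then N = X ⊕ X' for some submodule X' ≤ N. -/
open Submodule

section Aux

universe u v

variable {R : Type u} [Ring R]

private lemma isSingular_congr {A B : Type v} [AddCommGroup A] [Module R A]
    [AddCommGroup B] [Module R B] (e : A ≃ₗ[R] B) (h : IsSingular R A) : IsSingular R B := by
  obtain ⟨N, i1, i2, L, hL, ⟨f⟩⟩ := h
  exact ⟨N, i1, i2, L, hL, ⟨f.trans e⟩⟩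

private lemma deltaSmall_map {M₁ M₂ : Type v} [AddCommGroup M₁] [Module R M₁]
    [AddCommGroup M₂] [Module R M₂] (q : M₁ →ₗ[R] M₂) (hq : Function.Surjective q)
    {A : Submodule R M₁} (hA : DeltaSmall R A) : DeltaSmall R (A.map q) := by
  intro Z hZ hsing hsup
  set Z' := Z.comap q with hZ'def
  have hker : LinearMap.ker q ≤ Z' := by
    intro x hx
    simp only [hZ'def, Submodule.mem_comap, LinearMap.mem_ker.mp hx, Submodule.zero_mem]
  have hmap : (A ⊔ Z').map q = ⊤ := by
    rw [Submodule.map_sup, Submodule.map_comap_eq_of_surjective hq, hsup]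
  have hZ'top : A ⊔ Z' = ⊤ := by
    have h1 : (A ⊔ Z') ⊔ LinearMap.ker q = ⊤ := by
      rw [← Submodule.comap_map_eq, hmap, Submodule.comap_top]
    rwa [sup_assoc, sup_eq_left.mpr hker] at h1
  have hZ'ne : Z' ≠ ⊤ := by
    intro h
    apply hZ
    rw [← Submodule.map_comap_eq_of_surjective hq Z, ← hZ'def, h, Submodule.map_top,
      LinearMap.range_eq_top.mpr hq]
  -- transfer singularity along (M₁ ⧸ Z') ≃ (M₂ ⧸ Z)
  have hfsurj : Function.Surjective (Z.mkQ.comp q) := (Z.mkQ_surjective).comp hq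
  have hkerf : Z' = LinearMap.ker (Z.mkQ.comp q) := by
    rw [LinearMap.ker_comp, Submodule.ker_mkQ]
  have e : (M₁ ⧸ Z') ≃ₗ[R] (M₂ ⧸ Z) :=
    (Submodule.quotEquivOfEq _ _ hkerf).trans
      ((Z.mkQ.comp q).quotKerEquivOfSurjective hfsurj)
  exact hA Z' hZ'ne (isSingular_congr e.symm hsing) hZ'top

end Aux

set_option maxHeartbeats 1000000 in
theorem deltaCoclosed_direct_summand {R : Type*} [Ring R] {M : Type*} [AddCommGroup M]
    [Module R M] (N X : Submodule R M) (hN : DeltaCoclosed R N) (hXN : X ≤ N) (hX : X ≠ N)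
    (hsmall : DeltaSmall R (N.map X.mkQ)) :
    ∃ X' : Submodule R M, X' ≤ N ∧ X ⊓ X' = ⊥ ∧ X ⊔ X' = N := by
  classical
  -- choose X' maximal among submodules of N meeting X trivially
  set S : Set (Submodule R M) := {B | B ≤ N ∧ X ⊓ B = ⊥} with hS
  obtain ⟨X', hX'S, hX'max⟩ := zorn_le₀ S (by
    intro c hcS hc
    rcases c.eq_empty_or_nonempty with rfl | hne
    · exact ⟨⊥, ⟨bot_le, inf_bot_eq X⟩, by simp⟩
    · refine ⟨sSup c, ⟨?_, ?_⟩, fun z hz => le_sSup hz⟩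
      · exact sSup_le fun B hB => (hcS hB).1
      · rw [eq_bot_iff]
        intro x hx
        obtain ⟨hxX, hxs⟩ := Submodule.mem_inf.mp hx
        obtain ⟨B, hBc, hxB⟩ := (Submodule.mem_sSup_of_directed hne hc.directedOn).mp hxs
        have := (hcS hBc).2
        rw [← this]
        exact Submodule.mem_inf.mpr ⟨hxX, hxB⟩)
  obtain ⟨hX'N, hXX'⟩ := hX'S
  set Y := X ⊔ X' with hYdef
  have hYN : Y ≤ N := sup_le hXN hX'N
  -- Y is essential in N
  have hess : ∀ K : Submodule R M, K ≤ N → K ≠ ⊥ → Y ⊓ K ≠ ⊥ := by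
    intro K hKN hKbot h
    apply hKbot
    have hXdisj : X ⊓ (X' ⊔ K) = ⊥ := by
      rw [eq_bot_iff]
      intro x hx
      obtain ⟨hxX, hxs⟩ := Submodule.mem_inf.mp hx
      obtain ⟨a, ha, b, hb, rfl⟩ := Submodule.mem_sup.mp hxs
      have hbY : b ∈ Y ⊓ K := by
        refine Submodule.mem_inf.mpr ⟨?_, hb⟩
        have : b = (a + b) - a := (add_sub_cancel_left a b).symm
        rw [this]
        exact Submodule.sub_mem _ (Submodule.mem_sup_left hxX) (Submodule.mem_sup_right ha)
      rw [h] at hbY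
      simp only [Submodule.mem_bot] at hbY
      subst hbY
      rw [add_zero] at hxX ⊢
      have : a ∈ X ⊓ X' := Submodule.mem_inf.mpr ⟨hxX, ha⟩
      rw [hXX'] at this
      exact this
    have hmem : X' ⊔ K ∈ S := ⟨sup_le hX'N hKN, hXdisj⟩
    have hsup : X' ≤ X' ⊔ K := le_sup_left
    have h2 : X' ⊔ K ≤ X' := hX'max hmem hsup
    have hKX' : K ≤ X' := le_trans le_sup_right h2
    rw [eq_bot_iff, ← h]
    exact le_inf (le_trans hKX' le_sup_right) le_rfl
  -- N/Y is singular: N ⧸ (Y ⊓ N) with Y∩N essential in N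
  have hsing : IsSingular R ↥(N.map Y.mkQ) := by
    set f : ↥N →ₗ[R] M ⧸ Y := Y.mkQ.comp N.subtype with hfdef
    have hrange : LinearMap.range f = N.map Y.mkQ := by
      rw [hfdef, LinearMap.range_comp, Submodule.range_subtype]
    have hkerf : LinearMap.ker f = Y.comap N.subtype := by
      rw [hfdef, LinearMap.ker_comp, Submodule.ker_mkQ]
    refine ⟨↥N, inferInstance, inferInstance, Y.comap N.subtype, ?_, ?_⟩
    · -- essential
      intro K hK h
      apply hK
      have hKM : K.map N.subtype ≠ ⊥ := by
        intro hb
        apply hK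
        rw [← Submodule.comap_map_eq_self (f := N.subtype) (p := K)
          (by rw [Submodule.ker_subtype]; exact bot_le), hb, Submodule.comap_bot,
          Submodule.ker_subtype]
      have hKMN : K.map N.subtype ≤ N := Submodule.map_subtype_le N K
      exfalso
      apply hess _ hKMN hKM
      rw [eq_bot_iff]
      intro x hx
      obtain ⟨hxY, hxK⟩ := Submodule.mem_inf.mp hx
      obtain ⟨k, hk, rfl⟩ := hxK
      have hkmem : k ∈ Y.comap N.subtype ⊓ K := Submodule.mem_inf.mpr ⟨hxY, hk⟩
      rw [h] at hkmem
      simp only [Submodule.mem_bot] at hkmem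
      simp [hkmem]
    · exact ⟨(Submodule.quotEquivOfEq _ _ hkerf.symm).trans
        (f.quotKerEquivRange.trans (LinearEquiv.ofEq _ _ hrange))⟩
  -- N/Y is δ-small in M/Y
  have hdsmall : DeltaSmall R (N.map Y.mkQ) := by
    have hle : X ≤ LinearMap.ker Y.mkQ := by rw [Submodule.ker_mkQ]; exact le_sup_left
    set q : (M ⧸ X) →ₗ[R] M ⧸ Y := X.liftQ Y.mkQ hle with hqdef
    have hcomp : q.comp X.mkQ = Y.mkQ := X.liftQ_mkQ Y.mkQ hle
    have hqsurj : Function.Surjective q := by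
      intro y
      obtain ⟨m, rfl⟩ := Y.mkQ_surjective y
      exact ⟨X.mkQ m, by rw [← hcomp]; rfl⟩
    have := deltaSmall_map q hqsurj hsmall
    rwa [← Submodule.map_comp, hcomp] at this
  have hYeq : Y = N := hN Y hYN hsing hdsmall
  exact ⟨X', hX'N, hXX', hYeq⟩
end

section
/- Every δ-local module is δ-supplemented. -/
open Submodule

section Aux

universe u v

variable (R : Type u) [Ring R] {M : Type v} [AddCommGroup M] [Module R M]

lemma deltaSmall_of_le {N N' : Submodule R M} (h : DeltaSmall R N) (hle : N' ≤ N) :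
    DeltaSmall R N' := by
  intro Z hZ hs hsup
  exact h Z hZ hs (top_le_iff.mp (hsup ▸ sup_le_sup_right hle Z))

lemma deltaSmall_bot : DeltaSmall R (⊥ : Submodule R M) := by
  intro Z hZ _ hsup
  rw [bot_sup_eq] at hsup
  exact hZ hsup

lemma deltaSmall_comap_equiv {M₂ : Type v} [AddCommGroup M₂] [Module R M₂]
    (e : M ≃ₗ[R] M₂) {N : Submodule R M₂} (h : DeltaSmall R N) :
    DeltaSmall R (N.comap (e : M →ₗ[R] M₂)) := by
  intro Z hZ hs hsup
  set F := Submodule.orderIsoMapComap (R := R) (R₂ := R) e with hF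
  have key : ∀ P : Submodule R M, F P = P.map (e : M →ₗ[R] M₂) := fun P => by
    rw [hF]; ext x
    simp only [Submodule.orderIsoMapComap_apply, Submodule.mem_map]
  refine h (Z.map (e : M →ₗ[R] M₂)) ?_ ?_ ?_
  · intro hc
    apply hZ
    have : F Z = F ⊤ := by
      rw [F.map_top, key]; exact hc
    exact F.injective this
  · obtain ⟨N0, i1, i2, L0, hL0, ⟨f⟩⟩ := hs
    exact ⟨N0, i1, i2, L0, hL0,
      ⟨f.trans (Submodule.Quotient.equiv Z (Z.map (e : M →ₗ[R] M₂)) e rfl)⟩⟩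
  · have h1 : F (Z ⊔ N.comap (e : M →ₗ[R] M₂)) = F ⊤ := by
      rw [sup_comm] at hsup; rw [hsup]
    rw [F.map_sup, F.map_top, key] at h1
    have h2 : F (N.comap (e : M →ₗ[R] M₂)) = N := by
      rw [key]
      exact Submodule.map_comap_eq_of_surjective e.surjective N
    rw [h2] at h1
    rw [sup_comm]
    exact h1

lemma deltaSmall_comap_top {N : Submodule R M} (h : DeltaSmall R N) :
    DeltaSmall R (N.comap (⊤ : Submodule R M).subtype) := by
  have h2 := deltaSmall_comap_equiv R (Submodule.topEquiv (R := R) (M := M)) h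
  have : N.comap ((Submodule.topEquiv (R := R) (M := M)) : (⊤ : Submodule R M) →ₗ[R] M)
      = N.comap (⊤ : Submodule R M).subtype := by
    ext x; simp [Submodule.mem_comap]
  rwa [this] at h2

end Aux

theorem deltaLocal_is_deltaSupplemented {R : Type*} [Ring R] (M : Type*) [AddCommGroup M]
    [Module R M] (h : DeltaLocal R M) : DeltaSupplemented R M := by
  intro L
  by_cases hL : L ≤ deltaRad R
  · -- `L` is contained in `δ(M)`, hence `L` is δ-small and `⊤` is a δ-supplement.
    refine ⟨⊤, top_sup_eq L, ?_⟩
    have hTL : (⊤ : Submodule R M) ⊓ L = L := top_inf_eq L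
    rw [hTL]
    exact deltaSmall_comap_top R (deltaSmall_of_le R h.1 hL)
  · -- `L ⊔ δ(M) = ⊤` since `δ(M)` is a coatom.
    have hsupδ : deltaRad R ⊔ L = ⊤ := by
      refine h.2.2 _ ?_
      refine lt_of_le_of_ne le_sup_left fun hc => hL ?_
      rw [hc]
      exact le_sup_right
    -- Choose `Y` maximal with `Y ⊓ L = ⊥` by Zorn's lemma.
    obtain ⟨Y, -, hYmax⟩ := zorn_le_nonempty₀ {Y : Submodule R M | Y ⊓ L = ⊥}
      (fun c hcs hchain y hyc => by
        refine ⟨sSup c, ?_, fun z hz => le_sSup hz⟩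
        rw [Set.mem_setOf_eq, eq_bot_iff]
        intro x hx
        obtain ⟨hx1, hx2⟩ := hx
        obtain ⟨W, hWc, hxW⟩ := (Submodule.mem_sSup_of_directed ⟨y, hyc⟩
          hchain.directedOn).mp hx1
        have : x ∈ W ⊓ L := ⟨hxW, hx2⟩
        rwa [hcs hWc] at this)
      ⊥ (by simp)
    have hYL : Y ⊓ L = ⊥ := hYmax.1
    -- `Y ⊔ L` is essential in `M`.
    have hess : IsEssentialSub R (Y ⊔ L) := by
      intro K hK hc
      apply hK
      have hYKL : (Y ⊔ K) ⊓ L = ⊥ := by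
        rw [eq_bot_iff]
        rintro x ⟨hx1, hx2⟩
        obtain ⟨y, hy, k, hk, rfl⟩ := Submodule.mem_sup.mp hx1
        have hkYL : k ∈ (Y ⊔ L) ⊓ K := by
          refine ⟨?_, hk⟩
          have : k = (y + k) - y := by abel
          rw [this]
          exact Submodule.sub_mem _ (Submodule.mem_sup_right hx2)
            (Submodule.mem_sup_left hy)
        rw [hc] at hkYL
        simp only [Submodule.mem_bot] at hkYL
        subst hkYL
        have : y + 0 ∈ Y ⊓ L := ⟨by simpa using hy, hx2⟩
        rwa [hYL] at this
      have hKY : K ≤ Y := le_trans le_sup_right (hYmax.2 hYKL le_sup_left)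
      have hKle : K ≤ Y ⊔ L := le_trans hKY le_sup_left
      rw [← inf_eq_right.mpr hKle]
      exact hc
    -- The quotient `M ⧸ (Y ⊔ L)` is singular.
    have hsing : IsSingular R (M ⧸ (Y ⊔ L)) :=
      ⟨M, inferInstance, inferInstance, Y ⊔ L, hess, ⟨LinearEquiv.refl R _⟩⟩
    -- Hence `Y ⊔ L = ⊤` since `δ(M)` is δ-small.
    have htop : Y ⊔ L = ⊤ := by
      by_contra hne
      refine h.1 (Y ⊔ L) hne hsing ?_
      rw [eq_top_iff, ← hsupδ]
      exact sup_le_sup_left le_sup_right _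
    -- `Y` is a δ-supplement of `L`.
    refine ⟨Y, htop, ?_⟩
    rw [hYL, Submodule.comap_bot, Submodule.ker_subtype]
    exact deltaSmall_bot R
end

section
/- Let K be a maximal submodule of M containing Soc(M), and let L be a δ-supplement of K in M. Then L is δ-local, and moreover δ(L) = K ∩ L. -/
open Submodule

theorem deltaSupplement_of_maximal_is_deltaLocal {R : Type*} [Ring R] {M : Type*}
    [AddCommGroup M] [Module R M] (K L : Submodule R M) (hK : IsCoatom K)
    (hsoc : (socM R : Submodule R M) ≤ K) (hL : IsDeltaSupplement R L K) :
    DeltaLocal R L ∧ Submodule.map L.subtype (deltaRad R : Submodule R L) = K ⊓ L := by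
  obtain ⟨hsup, hsmall⟩ := hL
  set N : Submodule R L := (L ⊓ K).comap L.subtype with hN
  -- N ≠ ⊤
  have hNtop : N ≠ ⊤ := by
    intro h
    have hLK : L ≤ K := le_trans (comap_subtype_eq_top.mp h) inf_le_right
    exact hK.1 (by rw [← hsup, sup_eq_right.mpr hLK])
  -- K is essential in M
  have hess : IsEssentialSub R K := by
    intro A hA h0
    have hAatom : IsAtom A := by
      constructor
      · exact hA
      · intro B hB
        have hBK : B ⊔ K ≠ ⊤ := by
          intro htop
          have h1 : (B ⊔ K) ⊓ A = B ⊔ (K ⊓ A) := sup_inf_assoc_of_le K hB.le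
          rw [htop, top_inf_eq, h0, sup_bot_eq] at h1
          exact hB.ne' h1
        have hBleK : B ≤ K := by
          by_contra h
          exact hBK (hK.2 _ (lt_of_le_of_ne le_sup_right
            (fun he => h (he ▸ le_sup_left))))
        have hB0 : B ≤ K ⊓ A := le_inf hBleK hB.le
        rw [h0] at hB0
        exact le_bot_iff.mp hB0
    have hAK : A ≤ K := hsoc.trans' (le_sSup hAatom)
    exact hA (by rw [← h0, inf_eq_right.mpr hAK])
  -- M ⧸ K is singular
  have hsing : IsSingular R (M ⧸ K) :=
    ⟨M, inferInstance, inferInstance, K, hess, ⟨LinearEquiv.refl R (M ⧸ K)⟩⟩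
  -- the map L → M ⧸ K
  have hkerf : LinearMap.ker (K.mkQ ∘ₗ L.subtype) = N := by
    rw [hN, LinearMap.ker_comp, Submodule.ker_mkQ, Submodule.comap_inf,
      Submodule.comap_subtype_self, top_inf_eq]
  have hsurf : Function.Surjective (K.mkQ ∘ₗ L.subtype) := by
    intro x
    obtain ⟨m, rfl⟩ := K.mkQ_surjective x
    have hm : m ∈ L ⊔ K := by rw [hsup]; trivial
    obtain ⟨l, hl, k, hk, rfl⟩ := Submodule.mem_sup.mp hm
    refine ⟨⟨l, hl⟩, ?_⟩
    simp only [LinearMap.comp_apply, Submodule.coe_subtype, Submodule.mkQ_apply]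
    rw [Submodule.Quotient.eq]
    simpa using Submodule.neg_mem K hk
  -- L ⧸ N singular
  have hsingN : IsSingular R (↥L ⧸ N) := by
    refine ⟨M, inferInstance, inferInstance, K, hess, ⟨?_⟩⟩
    exact ((Submodule.quotEquivOfEq N _ hkerf.symm).trans
      ((K.mkQ ∘ₗ L.subtype).quotKerEquivOfSurjective hsurf)).symm
  have hmapN : Submodule.map L.subtype N = K ⊓ L := by
    rw [hN, Submodule.map_comap_subtype, ← inf_assoc, inf_idem, inf_comm]
  -- N is a coatom
  have hcoatom : IsCoatom N := by
    refine ⟨hNtop, fun Z hZ => ?_⟩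
    set Z' := Submodule.map L.subtype Z with hZ'
    have hZ'L : Z' ≤ L := Submodule.map_subtype_le L Z
    have hZ'K : ¬ Z' ≤ K := by
      intro h
      have : Z ≤ N := by
        have hmle : Z' ≤ Submodule.map L.subtype N := by
          rw [hmapN]; exact le_inf h hZ'L
        exact (Submodule.map_le_map_iff_of_injective L.injective_subtype _ _).mp hmle
      exact hZ.not_ge this
    have hZ'sup : Z' ⊔ K = ⊤ :=
      hK.2 _ (lt_of_le_of_ne le_sup_right (fun h => hZ'K (h ▸ le_sup_left)))
    have hLZ' : L ≤ Z' := by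
      have h1 : (Z' ⊔ K) ⊓ L = Z' ⊔ (K ⊓ L) := sup_inf_assoc_of_le K hZ'L
      rw [hZ'sup, top_inf_eq] at h1
      rw [h1]
      have hKL : K ⊓ L ≤ Z' := by rw [← hmapN]; exact Submodule.map_mono hZ.le
      exact sup_le le_rfl hKL
    have : Z' = Submodule.map L.subtype ⊤ := by
      rw [Submodule.map_top, Submodule.range_subtype]
      exact le_antisymm hZ'L hLZ'
    exact Submodule.map_injective_of_injective L.injective_subtype this
  -- deltaRad = N
  have hrad : (deltaRad R : Submodule R L) = N := by
    apply le_antisymm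
    · apply sSup_le
      intro S hS
      by_contra hSN
      have hSsup : S ⊔ N = ⊤ :=
        hcoatom.2 _ (lt_of_le_of_ne le_sup_right (fun h => hSN (h ▸ le_sup_left)))
      exact hS N hNtop hsingN hSsup
    · exact le_sSup hsmall
  refine ⟨⟨?_, ?_⟩, ?_⟩
  · rw [hrad]; exact hsmall
  · rw [hrad]; exact hcoatom
  · rw [hrad, hmapN]
end

section
/- Let M be a module with finitely generated socle and K a maximal submodule of M. If K has a δ-supplement in M, then K has a supplement in M contained in that δ-supplement. -/
open Submodule

section Aux

variable {R : Type*} [Ring R] {M : Type*} [AddCommGroup M] [Module R M]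

lemma comap_subtype_sup_of_le {H A B : Submodule R M} (hA : A ≤ H) (hB : B ≤ H) :
    (A ⊔ B).comap H.subtype = A.comap H.subtype ⊔ B.comap H.subtype := by
  apply le_antisymm
  · rintro ⟨x, hxH⟩ hmem
    simp only [Submodule.mem_comap, Submodule.subtype_apply] at hmem
    rcases Submodule.mem_sup.1 hmem with ⟨a, ha, b, hb, hab⟩
    refine Submodule.mem_sup.2 ⟨⟨a, hA ha⟩, ha, ⟨b, hB hb⟩, hb, ?_⟩
    exact Subtype.ext hab
  · exact sup_le (Submodule.comap_mono le_sup_left) (Submodule.comap_mono le_sup_right)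

/-- Any `X ≤ H` with `X ⊔ (H ⊓ K) = H` has a complement in `H`,
given that `H ⊓ K` is δ-small in `H`. -/
lemma exists_compl_of_deltaSmall {H K : Submodule R M}
    (hδ : DeltaSmall R ((H ⊓ K).comap H.subtype)) {X : Submodule R M}
    (hXH : X ≤ H) (hX : X ⊔ (H ⊓ K) = H) :
    ∃ Y : Submodule R M, Y ≤ H ∧ X ⊓ Y = ⊥ ∧ X ⊔ Y = H := by
  have hzorn : ∀ c ⊆ {Y : Submodule R M | Y ≤ H ∧ X ⊓ Y = ⊥}, IsChain (· ≤ ·) c →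
      ∃ ub ∈ {Y : Submodule R M | Y ≤ H ∧ X ⊓ Y = ⊥}, ∀ z ∈ c, z ≤ ub := by
    intro c hcs hchain
    rcases c.eq_empty_or_nonempty with rfl | hne
    · exact ⟨⊥, ⟨bot_le, by simp⟩, by simp⟩
    · refine ⟨sSup c, ⟨sSup_le fun z hz => (hcs hz).1, ?_⟩, fun z hz => le_sSup hz⟩
      rw [eq_bot_iff]
      rintro x hx
      obtain ⟨p, hpc, hxp⟩ :=
        (Submodule.mem_sSup_of_directed hne hchain.directedOn).1 hx.2
      have hmem : x ∈ X ⊓ p := ⟨hx.1, hxp⟩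
      rw [(hcs hpc).2] at hmem
      exact hmem
  obtain ⟨Y, hYmax⟩ := zorn_le₀ {Y : Submodule R M | Y ≤ H ∧ X ⊓ Y = ⊥} hzorn
  have hYH : Y ≤ H := hYmax.prop.1
  have hXY : X ⊓ Y = ⊥ := hYmax.prop.2
  have hess : ∀ A : Submodule R M, A ≤ H → (X ⊔ Y) ⊓ A = ⊥ → A = ⊥ := by
    intro A hAH hA
    have hmem : Y ⊔ A ∈ {Y : Submodule R M | Y ≤ H ∧ X ⊓ Y = ⊥} := by
      refine ⟨sup_le hYH hAH, ?_⟩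
      rw [eq_bot_iff]
      rintro v hv
      have hvX : v ∈ X := hv.1
      rcases Submodule.mem_sup.1 hv.2 with ⟨y, hy, a, ha, rfl⟩
      have haXY : a ∈ (X ⊔ Y) ⊓ A := by
        refine ⟨?_, ha⟩
        have h' : (y + a) - y ∈ X ⊔ Y :=
          Submodule.sub_mem _ (Submodule.mem_sup_left hvX) (Submodule.mem_sup_right hy)
        simpa using h'
      rw [hA] at haXY
      have ha0 : a = 0 := haXY
      subst ha0
      have h'' : y + 0 ∈ X ⊓ Y := ⟨hvX, by simpa using hy⟩
      rw [hXY] at h''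
      exact h''
    have hle : Y ⊔ A ≤ Y := hYmax.2 hmem le_sup_left
    have hAY : A ≤ Y := le_sup_right.trans hle
    rw [eq_bot_iff, ← hA]
    exact le_inf (hAY.trans le_sup_right) le_rfl
  refine ⟨Y, hYH, hXY, ?_⟩
  by_contra hne
  set Z : Submodule R ↥H := (X ⊔ Y).comap H.subtype with hZdef
  have hXYH : X ⊔ Y ≤ H := sup_le hXH hYH
  have hZtop : Z ≠ ⊤ := by
    intro h
    apply hne
    have h2 := congrArg (Submodule.map H.subtype) h
    rwa [Submodule.map_comap_subtype, Submodule.map_top, Submodule.range_subtype,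
      inf_eq_right.mpr hXYH] at h2
  have hsing : IsSingular R (↥H ⧸ Z) := by
    refine ⟨↥H, inferInstance, inferInstance, Z, ?_, ⟨LinearEquiv.refl R _⟩⟩
    intro B hB hZB
    apply hB
    have h1 : (X ⊔ Y) ⊓ Submodule.map H.subtype B = ⊥ := by
      rw [eq_bot_iff]
      rintro v hv
      rcases hv.2 with ⟨b, hb, rfl⟩
      have hbZ : b ∈ Z ⊓ B := ⟨hv.1, hb⟩
      rw [hZB] at hbZ
      have hb0 : b = (0 : ↥H) := hbZ
      simp [hb0]
    have hmapbot := hess _ (Submodule.map_subtype_le H B) h1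
    rw [eq_bot_iff]
    intro b hb
    have hbm : (b : M) ∈ Submodule.map H.subtype B := ⟨b, hb, rfl⟩
    rw [hmapbot, Submodule.mem_bot] at hbm
    simpa [Submodule.mem_bot] using Subtype.ext (p := fun x => x ∈ H) hbm
  have hsup : (H ⊓ K).comap H.subtype ⊔ Z = ⊤ := by
    rw [hZdef, ← comap_subtype_sup_of_le inf_le_left hXYH]
    have heq : (H ⊓ K) ⊔ (X ⊔ Y) = H := by
      apply le_antisymm (sup_le inf_le_left hXYH)
      calc H = X ⊔ (H ⊓ K) := hX.symm
        _ ≤ (H ⊓ K) ⊔ (X ⊔ Y) := sup_le (le_sup_right.trans' le_sup_left) le_sup_left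
    rw [heq, eq_top_iff]
    exact fun b _ => b.2
  exact hδ Z hZtop hsing hsup

/-- Refinement: the complement can be chosen inside the socle. -/
lemma exists_socle_compl_of_deltaSmall {H K : Submodule R M}
    (hδ : DeltaSmall R ((H ⊓ K).comap H.subtype)) {X : Submodule R M}
    (hXH : X ≤ H) (hX : X ⊔ (H ⊓ K) = H) :
    ∃ Y : Submodule R M, Y ≤ socM R ∧ X ⊓ Y = ⊥ ∧ X ⊔ Y = H := by
  obtain ⟨Y, hYH, hXY, hXYsup⟩ := exists_compl_of_deltaSmall hδ hXH hX
  refine ⟨Y, ?_, hXY, hXYsup⟩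
  -- every submodule of `Y` has a complement in `Y`
  have hcompl : ∀ W : Submodule R M, W ≤ Y →
      ∃ W', W' ≤ Y ∧ W ⊓ W' = ⊥ ∧ W ⊔ W' = Y := by
    intro W hWY
    have hWH : W ≤ H := hWY.trans hYH
    obtain ⟨Y', hY'H, h1, h2⟩ := exists_compl_of_deltaSmall hδ (X := X ⊔ W)
      (sup_le hXH hWH)
      (le_antisymm (sup_le (sup_le hXH hWH) inf_le_left)
        (by calc H = X ⊔ (H ⊓ K) := hX.symm
              _ ≤ (X ⊔ W) ⊔ (H ⊓ K) := sup_le_sup_right le_sup_left _))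
    refine ⟨Y ⊓ (X ⊔ Y'), inf_le_left, ?_, ?_⟩
    · rw [eq_bot_iff]
      rintro w hw
      have hwW : w ∈ W := hw.1
      rcases Submodule.mem_sup.1 hw.2.2 with ⟨x, hx, y', hy', hxy'⟩
      have hy'mem : y' ∈ (X ⊔ W) ⊓ Y' := by
        refine ⟨?_, hy'⟩
        have h' : w - x ∈ X ⊔ W :=
          Submodule.sub_mem _ (Submodule.mem_sup_right hwW) (Submodule.mem_sup_left hx)
        rw [show w - x = y' by rw [← hxy']; abel] at h'
        exact h'
      rw [h1] at hy'mem
      have hy'0 : y' = 0 := hy'mem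
      have hwx : w = x := by rw [← hxy', hy'0, add_zero]
      have hmem : w ∈ X ⊓ Y := ⟨hwx ▸ hx, hWY hwW⟩
      rw [hXY] at hmem
      exact hmem
    · have hmod := sup_inf_assoc_of_le (X ⊔ Y') hWY
      have hWXY' : W ⊔ (X ⊔ Y') = H := by
        rw [← h2]; rw [sup_comm X W, sup_assoc]
      rw [hWXY', inf_eq_right.mpr hYH, inf_comm (X ⊔ Y') Y] at hmod
      exact hmod.symm
  -- hence `Y` is a semisimple module
  have hinj : Function.Injective Y.subtype := Y.injective_subtype
  have hss : IsSemisimpleModule R ↥Y := by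
    refine IsSemisimpleModule.mk (toComplementedLattice := ⟨?_⟩)
    intro W'
    obtain ⟨W'', hW''Y, hd, hc⟩ := hcompl (Submodule.map Y.subtype W')
      (Submodule.map_subtype_le _ _)
    refine ⟨W''.comap Y.subtype, ?_, ?_⟩
    · rw [disjoint_iff]
      apply Submodule.map_injective_of_injective hinj
      rw [Submodule.map_inf _ hinj, Submodule.map_comap_subtype, Submodule.map_bot,
        inf_eq_right.mpr hW''Y]
      exact hd
    · rw [codisjoint_iff]
      apply Submodule.map_injective_of_injective hinj
      rw [Submodule.map_sup, Submodule.map_comap_subtype, Submodule.map_top,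
        Submodule.range_subtype, inf_eq_right.mpr hW''Y]
      exact hc
  -- a semisimple submodule is contained in the socle
  have hY : Y = Submodule.map Y.subtype
      (sSup {m : Submodule R ↥Y | IsSimpleModule R m}) := by
    rw [IsSemisimpleModule.sSup_simples_eq_top, Submodule.map_top, Submodule.range_subtype]
  rw [hY, sSup_eq_iSup', Submodule.map_iSup]
  apply iSup_le
  rintro ⟨p, hp⟩
  haveI : IsSimpleModule R ↥p := hp
  haveI : IsSimpleModule R ↥(Submodule.map Y.subtype p) :=
    IsSimpleModule.congr (Submodule.equivMapOfInjective Y.subtype hinj p).symm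
  exact le_sSup (isSimpleModule_iff_isAtom.1 ‹IsSimpleModule R ↥(Submodule.map Y.subtype p)›)

end Aux

theorem supplement_in_deltaSupplement {R : Type*} [Ring R] {M : Type*} [AddCommGroup M]
    [Module R M] (hsoc : (socM R : Submodule R M).FG) (K H : Submodule R M)
    (hK : IsCoatom K) (hH : IsDeltaSupplement R H K) :
    ∃ N : Submodule R M, N ≤ H ∧ IsSupplement R N K := by
  obtain ⟨hsupK, hδ⟩ := hH
  set soc : Submodule R M := socM R with hsocdef
  -- the socle is a semisimple module
  haveI hss : IsSemisimpleModule R ↥soc := by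
    have heq : soc = ⨆ S ∈ {S : Submodule R M | IsAtom S}, S := by
      rw [hsocdef, socM, sSup_eq_iSup]
    have h1 : IsSemisimpleModule R ↥(⨆ S ∈ {S : Submodule R M | IsAtom S}, S) := by
      refine isSemisimpleModule_biSup_of_isSemisimpleModule_submodule ?_
      intro S hS
      haveI : IsSimpleModule R ↥S := isSimpleModule_iff_isAtom.2 hS
      infer_instance
    rwa [← heq] at h1
  haveI : Module.Finite R ↥soc := Module.Finite.iff_fg.mpr hsoc
  haveI hart : IsArtinian R ↥soc := inferInstance
  have wf : WellFounded ((· < ·) : Submodule R ↥soc → Submodule R ↥soc → Prop) :=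
    IsWellFounded.wf
  set g : Submodule R M → Submodule R ↥soc := fun N => (N ⊓ soc).comap soc.subtype with hg
  set T : Set (Submodule R ↥soc) := g '' {N : Submodule R M | N ≤ H ∧ N ⊔ K = ⊤} with hT
  obtain ⟨t, htT, htmin⟩ := wf.has_min T ⟨g H, H, ⟨le_rfl, hsupK⟩, rfl⟩
  obtain ⟨N₀, ⟨hN₀H, hN₀K⟩, rfl⟩ := htT
  refine ⟨N₀, hN₀H, hN₀K, ?_⟩
  intro W hWne hWsup
  set Z : Submodule R M := Submodule.map N₀.subtype W with hZdef
  have hZN : Z ≤ N₀ := Submodule.map_subtype_le _ _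
  have hZne : Z ≠ N₀ := by
    intro h
    apply hWne
    have hW : W = Z.comap N₀.subtype := by
      rw [hZdef, Submodule.comap_map_eq, Submodule.ker_subtype, sup_bot_eq]
    rw [hW, h, eq_top_iff]
    exact fun b _ => b.2
  have hsupZ : (N₀ ⊓ K) ⊔ Z = N₀ := by
    have h2 := congrArg (Submodule.map N₀.subtype) hWsup
    rwa [Submodule.map_sup, Submodule.map_comap_subtype, Submodule.map_top,
      Submodule.range_subtype, inf_eq_right.mpr inf_le_left] at h2
  have hZK : Z ⊔ K = ⊤ := by
    have hN₀le : N₀ ≤ Z ⊔ K := by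
      rw [← hsupZ]
      exact sup_le (inf_le_right.trans le_sup_right) le_sup_left
    exact le_antisymm le_top (hN₀K ▸ sup_le hN₀le le_sup_right)
  have hZH : Z ≤ H := hZN.trans hN₀H
  have hZHK : Z ⊔ (H ⊓ K) = H := by
    have hmod := sup_inf_assoc_of_le K hZH
    rw [hZK, top_inf_eq, inf_comm K H] at hmod
    exact hmod.symm
  obtain ⟨Y, hYsoc, hZY, hZYsup⟩ := exists_socle_compl_of_deltaSmall hδ hZH hZHK
  have hgZ : g Z ≤ g N₀ := Submodule.comap_mono (inf_le_inf_right _ hZN)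
  have hgeq : g Z = g N₀ := by
    by_contra hne'
    exact htmin (g Z) ⟨Z, ⟨hZH, hZK⟩, rfl⟩ (lt_of_le_of_ne hgZ hne')
  have hZsoc : Z ⊓ soc = N₀ ⊓ soc := by
    have h3 := congrArg (Submodule.map soc.subtype) hgeq
    rwa [hg, Submodule.map_comap_subtype, Submodule.map_comap_subtype,
      inf_eq_right.mpr inf_le_right, inf_eq_right.mpr inf_le_right] at h3
  have hmod2 := sup_inf_assoc_of_le Y hZN
  rw [hZYsup, inf_eq_right.mpr hN₀H] at hmod2
  have hYN : Y ⊓ N₀ ≤ Z ⊓ Y := by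
    refine le_inf ?_ inf_le_left
    have h1 : Y ⊓ N₀ ≤ N₀ ⊓ soc := le_inf inf_le_right (inf_le_left.trans hYsoc)
    rw [← hZsoc] at h1
    exact h1.trans inf_le_left
  rw [hZY] at hYN
  rw [le_bot_iff.mp hYN, sup_bot_eq] at hmod2
  exact hZne hmod2.symm
end
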